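/- arXiv:1909.06880 — 8 statements merged into one kernel-verified Lean document; each statement's English description precedes it below -/
import Mathlib

section
/- For a non-real quaternion α, the similarity class {hαh⁻¹ : h ∈ ℍ \ {0}} equals the set {β ∈ ℍ : Re β = Re α and |β| = |α|}. -/
open Quaternion

lemma quat_mul_re_comm (a b : Quaternion ℝ) : (a * b).re = (b * a).re := by
  simp only [Quaternion.re_mul]; ring

lemma quat_conj_re (h α : Quaternion ℝ) (hh : h ≠ 0) :
    (h * α * h⁻¹).re = α.re := by
  rw [quat_mul_re_comm, ← mul_assoc, inv_mul_cancel₀ hh, one_mul]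

/-- For a non-real quaternion α, the similarity class {hαh⁻¹ : h ≠ 0} equals
{β : Re β = Re α and |β| = |α|}. -/
theorem similarity_class_eq (α : Quaternion ℝ) (hα : α.im ≠ 0) :
    {β : Quaternion ℝ | ∃ h : Quaternion ℝ, h ≠ 0 ∧ β = h * α * h⁻¹} =
      {β : Quaternion ℝ | β.re = α.re ∧ ‖β‖ = ‖α‖} := by
  ext β
  simp only [Set.mem_setOf_eq]
  constructor
  · rintro ⟨h, hh, rfl⟩
    refine ⟨quat_conj_re h α hh, ?_⟩
    rw [norm_mul, norm_mul, norm_inv, mul_comm, ← mul_assoc,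
      inv_mul_cancel₀ (norm_ne_zero_iff.mpr hh), one_mul]
  · rintro ⟨hre, hnorm⟩
    -- normSq equality
    have hns : normSq β = normSq α := by
      rw [normSq_eq_norm_mul_self, normSq_eq_norm_mul_self, hnorm]
    have hcomp : β.imI ^ 2 + β.imJ ^ 2 + β.imK ^ 2
        = α.imI ^ 2 + α.imJ ^ 2 + α.imK ^ 2 := by
      have := hns
      rw [normSq_def', normSq_def', hre] at this
      linarith
    -- key: find h ≠ 0 with h * α = β * h
    suffices hkey : ∃ h : Quaternion ℝ, h ≠ 0 ∧ h * α = β * h by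
      obtain ⟨h, hh, heq⟩ := hkey
      exact ⟨h, hh, by rw [heq, mul_assoc, mul_inv_cancel₀ hh, mul_one]⟩
    by_cases hc : β.im + α.im = 0
    · -- β.im = -α.im : conjugate by a pure quaternion orthogonal to α.im
      have hβim : β.im = -α.im := eq_neg_of_add_eq_zero_left hc
      by_cases hab : α.imI = 0 ∧ α.imJ = 0
      · refine ⟨id (α := Quaternion ℝ) ⟨0, 1, 0, 0⟩, ?_, ?_⟩
        · intro h0
          have := congrArg QuaternionAlgebra.imI h0
          simp [id] at this
        · have hK : α.imK ≠ 0 := by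
            intro h0
            apply hα
            ext <;> simp [hab.1, hab.2, h0]
          have h1 : β.imI = -α.imI := by
            have := congrArg QuaternionAlgebra.imI hβim; simpa using this
          have h2 : β.imJ = -α.imJ := by
            have := congrArg QuaternionAlgebra.imJ hβim; simpa using this
          have h3 : β.imK = -α.imK := by
            have := congrArg QuaternionAlgebra.imK hβim; simpa using this
          ext <;> simp [Quaternion.re_mul, Quaternion.imI_mul, Quaternion.imJ_mul,
            Quaternion.imK_mul, hre, h1, h2, h3, hab.1, hab.2] <;> simp [id]
      · refine ⟨id (α := Quaternion ℝ) ⟨0, α.imJ, -α.imI, 0⟩, ?_, ?_⟩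
        · intro h0
          apply hab
          constructor
          · have := congrArg QuaternionAlgebra.imJ h0; simpa [id] using this
          · have := congrArg QuaternionAlgebra.imI h0; simpa [id] using this
        · have h1 : β.imI = -α.imI := by
            have := congrArg QuaternionAlgebra.imI hβim; simpa using this
          have h2 : β.imJ = -α.imJ := by
            have := congrArg QuaternionAlgebra.imJ hβim; simpa using this
          have h3 : β.imK = -α.imK := by
            have := congrArg QuaternionAlgebra.imK hβim; simpa using this
          ext <;> simp [Quaternion.re_mul, Quaternion.imI_mul, Quaternion.imJ_mul,
            Quaternion.imK_mul, hre, h1, h2, h3] <;> simp [id] <;> ring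
    · -- h = β.im + α.im works
      refine ⟨β.im + α.im, hc, ?_⟩
      ext <;> simp [Quaternion.re_mul, Quaternion.imI_mul, Quaternion.imJ_mul,
        Quaternion.imK_mul, hre] <;> nlinarith [hcomp]
end

section
/- For a non-real quaternion α, the orthogonal complement of C_α = {β : αβ = βα} in ℍ ≅ ℝ⁴ (with the Euclidean inner product) equals the set of intertwiners {β ∈ ℍ : αβ = βᾱ}. -/
/-- For a non-real quaternion α, the orthogonal complement of the centralizer
C_α in ℍ ≅ ℝ⁴ equals the set of intertwiners {β : αβ = βᾱ}. -/
theorem orthogonal_centralizer_eq_intertwiners (α : Quaternion ℝ) (hα : α.im ≠ 0) :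
    ((Subalgebra.toSubmodule (Subalgebra.centralizer ℝ {α}))ᗮ : Set (Quaternion ℝ)) =
      {β : Quaternion ℝ | α * β = β * star α} := by
  have hS : α.imI ^ 2 + α.imJ ^ 2 + α.imK ^ 2 ≠ 0 := by
    intro h
    apply hα
    ext <;> simp [Quaternion.re_zero, Quaternion.imI_zero, Quaternion.imJ_zero, Quaternion.imK_zero] <;> nlinarith [sq_nonneg α.imI, sq_nonneg α.imJ, sq_nonneg α.imK]
  ext β
  simp only [SetLike.mem_coe, Submodule.mem_orthogonal, Subalgebra.mem_toSubmodule,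
    Subalgebra.mem_centralizer_iff, Set.mem_singleton_iff, forall_eq, Set.mem_setOf_eq]
  constructor
  · intro h
    have h1 : β.re = 0 := by
      have := h 1 (by simp)
      simpa [Quaternion.inner_def] using this
    have h2 : α.re * β.re + α.imI * β.imI + α.imJ * β.imJ + α.imK * β.imK = 0 := by
      have := h α rfl
      rw [Quaternion.inner_def] at this
      simp only [Quaternion.re_mul, Quaternion.re_star, Quaternion.imI_star,
        Quaternion.imJ_star, Quaternion.imK_star] at this
      linarith
    ext <;>
      simp only [Quaternion.re_mul, Quaternion.imI_mul, Quaternion.imJ_mul, Quaternion.imK_mul,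
        Quaternion.re_star, Quaternion.imI_star, Quaternion.imJ_star, Quaternion.imK_star]
    · linear_combination (-2 : ℝ) * h2 + (2 * α.re) * h1
    · linear_combination (2 * α.imI) * h1
    · linear_combination (2 * α.imJ) * h1
    · linear_combination (2 * α.imK) * h1
  · intro h v hv
    have e0 := congrArg QuaternionAlgebra.re h
    have e1 := congrArg QuaternionAlgebra.imI h
    have e2 := congrArg QuaternionAlgebra.imJ h
    have e3 := congrArg QuaternionAlgebra.imK h
    simp only [Quaternion.re_mul, Quaternion.imI_mul, Quaternion.imJ_mul, Quaternion.imK_mul,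
      Quaternion.re_star, Quaternion.imI_star, Quaternion.imJ_star, Quaternion.imK_star]
      at e0 e1 e2 e3
    have hb0 : β.re = 0 := by
      have hS0 : (α.imI ^ 2 + α.imJ ^ 2 + α.imK ^ 2) * β.re = 0 := by
        linear_combination (α.imI / 2) * e1 + (α.imJ / 2) * e2 + (α.imK / 2) * e3
      exact (mul_eq_zero.mp hS0).resolve_left hS
    have hdot : α.imI * β.imI + α.imJ * β.imJ + α.imK * β.imK = 0 := by
      linear_combination (-1 / 2 : ℝ) * e0
    have f1 := congrArg QuaternionAlgebra.imI hv
    have f2 := congrArg QuaternionAlgebra.imJ hv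
    have f3 := congrArg QuaternionAlgebra.imK hv
    simp only [Quaternion.imI_mul, Quaternion.imJ_mul, Quaternion.imK_mul] at f1 f2 f3
    have key : (α.imI ^ 2 + α.imJ ^ 2 + α.imK ^ 2) *
        (v.imI * β.imI + v.imJ * β.imJ + v.imK * β.imK) = 0 := by
      linear_combination (α.imI * v.imI + α.imJ * v.imJ + α.imK * v.imK) * hdot +
        ((α.imJ * β.imK - α.imK * β.imJ) / 2) * f1 +
        ((α.imK * β.imI - α.imI * β.imK) / 2) * f2 +
        ((α.imI * β.imJ - α.imJ * β.imI) / 2) * f3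
    have key' := (mul_eq_zero.mp key).resolve_left hS
    rw [Quaternion.inner_def]
    simp only [Quaternion.re_mul, Quaternion.re_star, Quaternion.imI_star,
      Quaternion.imJ_star, Quaternion.imK_star]
    linear_combination v.re * hb0 + key'
end

section
/- If α is a non-real quaternion, γ ∈ C_α (i.e., γα = αγ) and β satisfies αβ = βᾱ, then βγ = γ̄β and βγ again satisfies α(βγ) = (βγ)ᾱ. -/
open Quaternion

/-- If α is non-real, γ commutes with α and β intertwines α and ᾱ,
then βγ = γ̄β and α(βγ) = (βγ)ᾱ. -/
theorem intertwiner_mul_centralizer (α β γ : Quaternion ℝ) (hα : α.im ≠ 0)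
    (hγ : γ * α = α * γ) (hβ : α * β = β * star α) :
    β * γ = star γ * β ∧ α * (β * γ) = (β * γ) * star α := by
  -- star α commutes with γ
  have hsγ : star α * γ = γ * star α := by
    rw [Quaternion.star_eq_two_re_sub, sub_mul, mul_sub, hγ, Quaternion.coe_commutes]
  -- β α = star α β
  have hβα : β * α = star α * β := by
    have h2 : star α * β = ((2 * α.re : ℝ) : Quaternion ℝ) * β - α * β := by
      rw [Quaternion.star_eq_two_re_sub, sub_mul]
    rw [h2, hβ, Quaternion.star_eq_two_re_sub, mul_sub, Quaternion.mul_coe_eq_smul,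
      Quaternion.coe_mul_eq_smul]
    abel
  -- component equations from hγ
  have h1 : (γ * α).imI = (α * γ).imI := by rw [hγ]
  have h2 : (γ * α).imJ = (α * γ).imJ := by rw [hγ]
  have h3 : (γ * α).imK = (α * γ).imK := by rw [hγ]
  rw [Quaternion.imI_mul, Quaternion.imI_mul] at h1
  rw [Quaternion.imJ_mul, Quaternion.imJ_mul] at h2
  rw [Quaternion.imK_mul, Quaternion.imK_mul] at h3
  set a0 := α.re; set a1 := α.imI; set a2 := α.imJ; set a3 := α.imK
  set c0 := γ.re; set c1 := γ.imI; set c2 := γ.imJ; set c3 := γ.imK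
  have cr1 : c2 * a3 = c3 * a2 := by linarith
  have cr2 : c3 * a1 = c1 * a3 := by linarith
  have cr3 : c1 * a2 = c2 * a1 := by linarith
  have hS : a1 ^ 2 + a2 ^ 2 + a3 ^ 2 ≠ 0 := by
    intro h
    apply hα
    have e1 : a1 = 0 := by nlinarith [sq_nonneg a1, sq_nonneg a2, sq_nonneg a3]
    have e2 : a2 = 0 := by nlinarith [sq_nonneg a1, sq_nonneg a2, sq_nonneg a3]
    have e3 : a3 = 0 := by nlinarith [sq_nonneg a1, sq_nonneg a2, sq_nonneg a3]
    ext <;>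
      simp only [Quaternion.re_im, Quaternion.imI_im, Quaternion.imJ_im, Quaternion.imK_im,
        Quaternion.re_zero, Quaternion.imI_zero, Quaternion.imJ_zero, Quaternion.imK_zero] <;>
      first | rfl | assumption
  set r : ℝ := (c1 * a1 + c2 * a2 + c3 * a3) / (a1 ^ 2 + a2 ^ 2 + a3 ^ 2) with hr
  have e1 : c1 = r * a1 := by
    rw [hr, div_mul_eq_mul_div, eq_div_iff hS]; linear_combination a2 * cr3 - a3 * cr2
  have e2 : c2 = r * a2 := by
    rw [hr, div_mul_eq_mul_div, eq_div_iff hS]; linear_combination a3 * cr1 - a1 * cr3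
  have e3 : c3 = r * a3 := by
    rw [hr, div_mul_eq_mul_div, eq_div_iff hS]; linear_combination a1 * cr2 - a2 * cr1
  have hγeq : γ = ((c0 - r * a0 : ℝ) : Quaternion ℝ) + r • α := by
    ext
    · simp only [Quaternion.re_add, Quaternion.re_coe, Quaternion.re_smul, smul_eq_mul]; ring
    · simpa only [Quaternion.imI_add, Quaternion.imI_coe, Quaternion.imI_smul, smul_eq_mul,
        zero_add] using e1
    · simpa only [Quaternion.imJ_add, Quaternion.imJ_coe, Quaternion.imJ_smul, smul_eq_mul,
        zero_add] using e2
    · simpa only [Quaternion.imK_add, Quaternion.imK_coe, Quaternion.imK_smul, smul_eq_mul,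
        zero_add] using e3
  constructor
  · rw [hγeq, star_add, mul_add, add_mul]
    congr 1
    · rw [Quaternion.star_coe, Quaternion.mul_coe_eq_smul, Quaternion.coe_mul_eq_smul]
    · rw [Quaternion.star_smul, mul_smul_comm, smul_mul_assoc, hβα]
  · rw [← mul_assoc, hβ, mul_assoc, hsγ, ← mul_assoc]
end

section
/- For α ∈ ℍ with 0 < |α| < 1, the left evaluation of the series k_α(z) = Σ ᾱᵏ zᵏ at any γ with |γ| < 1/|α| equals (1 − γ(α + ᾱ) + γ²|α|²)⁻¹ (1 − γα), and the denominator 1 − γ(α+ᾱ) + γ²|α|² is a nonzero real-coefficient expression; in particular k_α has no left zeros. -/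
/-- For 0 < |α| < 1 and |γ| < 1/|α|, the left value of k_α(z) = Σ ᾱᵏzᵏ at γ equals
(1 − γ(α+ᾱ) + γ²|α|²)⁻¹(1 − γα); the denominator is nonzero and the value is
nonzero, so k_α has no left zeros. -/
theorem kernel_series_left_value (α : Quaternion ℝ) (h0 : 0 < ‖α‖) (h1 : ‖α‖ < 1)
    (γ : Quaternion ℝ) (hγ : ‖γ‖ < 1 / ‖α‖) :
    1 - γ * (α + star α) + γ ^ 2 * ((‖α‖ ^ 2 : ℝ) : Quaternion ℝ) ≠ 0 ∧
    HasSum (fun k : ℕ => γ ^ k * (star α) ^ k)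
      ((1 - γ * (α + star α) + γ ^ 2 * ((‖α‖ ^ 2 : ℝ) : Quaternion ℝ))⁻¹ *
        (1 - γ * α)) ∧
    (1 - γ * (α + star α) + γ ^ 2 * ((‖α‖ ^ 2 : ℝ) : Quaternion ℝ))⁻¹ *
        (1 - γ * α) ≠ 0 := by
  set D : Quaternion ℝ :=
    1 - γ * (α + star α) + γ ^ 2 * ((‖α‖ ^ 2 : ℝ) : Quaternion ℝ) with hDdef
  set f : ℕ → Quaternion ℝ := fun k => γ ^ k * (star α) ^ k with hfdef
  have hx : ‖γ‖ * ‖α‖ < 1 := by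
    have := mul_lt_mul_of_pos_right hγ h0
    rwa [div_mul_cancel₀ _ h0.ne'] at this
  -- 1 - γ * α ≠ 0
  have hga : 1 - γ * α ≠ 0 := by
    intro h
    have h' : γ * α = 1 := by rw [sub_eq_zero] at h; exact h.symm
    have : ‖γ * α‖ = 1 := by rw [h', norm_one]
    rw [norm_mul] at this
    exact absurd this (ne_of_lt hx)
  -- summability
  have hsum : Summable f := by
    apply Summable.of_norm
    have heq : ∀ k, ‖f k‖ = (‖γ‖ * ‖α‖) ^ k := by
      intro k
      simp [hfdef, norm_mul, norm_pow, mul_pow, Quaternion.norm_star]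
    rw [funext heq]
    exact summable_geometric_of_lt_one (by positivity) hx
  set S : Quaternion ℝ := ∑' k, f k with hSdef
  have hS : HasSum f S := hsum.hasSum
  -- commuting facts
  have hnsq : ((‖α‖ ^ 2 : ℝ) : Quaternion ℝ) = α * star α := by
    rw [Quaternion.self_mul_star, Quaternion.normSq_eq_norm_mul_self, sq]
  have hc : Commute α (star α) := (star_comm_self' α).symm
  have hA : Commute (α + star α) γ := by
    rw [Quaternion.self_add_star']; exact Quaternion.coe_commute _ γ
  have hB : Commute (α * star α) γ := by
    rw [← hnsq]; exact Quaternion.coe_commute _ γ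
  -- telescoping terms
  set u : ℕ → Quaternion ℝ :=
    fun n => γ ^ n * (star α) ^ n - γ ^ (n + 1) * (α * (star α) ^ n) with hudef
  have hDf : ∀ k, D * f k = u k - u (k + 1) := by
    intro k
    have h2k : γ ^ 2 * γ ^ k = γ ^ (k + 2) := by rw [← pow_add, add_comm]
    simp only [hudef, hfdef, hDdef, hnsq]
    calc (1 - γ * (α + star α) + γ ^ 2 * (α * star α)) * (γ ^ k * (star α) ^ k)
        = γ ^ k * (star α) ^ k - γ * ((α + star α) * γ ^ k) * (star α) ^ k
            + γ ^ 2 * ((α * star α) * γ ^ k) * (star α) ^ k := by noncomm_ring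
      _ = γ ^ k * (star α) ^ k - γ * (γ ^ k * (α + star α)) * (star α) ^ k
            + γ ^ 2 * (γ ^ k * (α * star α)) * (star α) ^ k := by
            rw [(hA.pow_right k).eq, (hB.pow_right k).eq]
      _ = γ ^ k * (star α) ^ k - (γ * γ ^ k) * ((α + star α) * (star α) ^ k)
            + (γ ^ 2 * γ ^ k) * ((α * star α) * (star α) ^ k) := by noncomm_ring
      _ = γ ^ k * (star α) ^ k
            - γ ^ (k+1) * (α * (star α) ^ k + star α * (star α) ^ k)
            + γ ^ (k+2) * (α * (star α * (star α) ^ k)) := by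
            rw [← pow_succ', h2k, add_mul, mul_assoc α]
      _ = _ := by rw [← pow_succ', mul_add]; abel
  -- u tends to zero
  have hu_eq : ∀ n, u n = f n - γ * f n * α := by
    intro n
    have : γ ^ (n + 1) * (α * (star α) ^ n) = γ * (γ ^ n * (star α) ^ n) * α := by
      rw [pow_succ', mul_assoc γ, mul_assoc γ, mul_assoc (γ ^ n),
        (hc.pow_right n).eq]
    simp only [hudef, hfdef, this]
  have hu0 : Filter.Tendsto u Filter.atTop (nhds 0) := by
    have hf0 : Filter.Tendsto f Filter.atTop (nhds 0) := hsum.tendsto_atTop_zero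
    have h := (hf0.sub ((hf0.const_mul γ).mul_const α))
    rw [funext hu_eq]
    simpa using h
  -- D * S = 1 - γ * α
  have hDS : D * S = 1 - γ * α := by
    have hS' : HasSum (fun k => D * f k) (D * S) := hS.mul_left D
    have htend := hS'.tendsto_sum_nat
    have hpart : ∀ n, ∑ k ∈ Finset.range n, D * f k = u 0 - u n := by
      intro n
      simp only [hDf]
      exact Finset.sum_range_sub' u n
    rw [funext hpart] at htend
    have htend2 : Filter.Tendsto (fun n => u 0 - u n) Filter.atTop (nhds (u 0)) := by
      have := (tendsto_const_nhds (x := u 0)).sub hu0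
      simpa using this
    rw [tendsto_nhds_unique htend htend2]
    simp [hudef]
  have hD : D ≠ 0 := by
    intro h
    rw [h, zero_mul] at hDS
    exact hga hDS.symm
  have hSval : S = D⁻¹ * (1 - γ * α) := by
    rw [← hDS, ← mul_assoc, inv_mul_cancel₀ hD, one_mul]
  refine ⟨hD, ?_, ?_⟩
  · rwa [← hSval]
  · intro h
    rw [← hSval] at h
    rw [h, mul_zero] at hDS
    exact hga hDS.symm
end

section
/- Let α, γ ∈ ℍ with |α| < 1, |γ| ≤ 1. With γ_ℓ = (1 − γα)⁻¹γ(1 − γα), the quantity b = (1 − γ_ℓ ᾱ)⁻¹ (γ_ℓ − α) satisfies 1 − |b|² = (1 − |α|²)(1 − |γ|²) / |1 − γ_ℓ ᾱ|². In particular |b| < 1 when |γ| < 1 and |b| = 1 when |γ| = 1. -/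
open Quaternion

lemma key_identity (p q : Quaternion ℝ) :
    normSq (1 - q * star p) = normSq (q - p) + (1 - normSq p) * (1 - normSq q) := by
  simp only [normSq_def', Quaternion.re_sub, Quaternion.imI_sub, Quaternion.imJ_sub,
    Quaternion.imK_sub, Quaternion.re_one, Quaternion.imI_one, Quaternion.imJ_one,
    Quaternion.imK_one, Quaternion.re_mul, Quaternion.imI_mul, Quaternion.imJ_mul,
    Quaternion.imK_mul, Quaternion.re_star, Quaternion.imI_star, Quaternion.imJ_star,
    Quaternion.imK_star]
  ring

/-- For |α| < 1, |γ| ≤ 1 and γ_ℓ = (1−γα)⁻¹γ(1−γα), the value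
b = (1 − γ_ℓᾱ)⁻¹(γ_ℓ − α) satisfies
1 − |b|² = (1−|α|²)(1−|γ|²)/|1 − γ_ℓᾱ|²; in particular |b| < 1 when |γ| < 1
and |b| = 1 when |γ| = 1. -/
theorem blaschke_factor_modulus (α γ : Quaternion ℝ) (hα : ‖α‖ < 1) (hγ : ‖γ‖ ≤ 1) :
    (1 - ‖(1 - ((1 - γ * α)⁻¹ * γ * (1 - γ * α)) * star α)⁻¹ *
          (((1 - γ * α)⁻¹ * γ * (1 - γ * α)) - α)‖ ^ 2 =
        (1 - ‖α‖ ^ 2) * (1 - ‖γ‖ ^ 2) /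
          ‖1 - ((1 - γ * α)⁻¹ * γ * (1 - γ * α)) * star α‖ ^ 2) ∧
    (‖γ‖ < 1 →
      ‖(1 - ((1 - γ * α)⁻¹ * γ * (1 - γ * α)) * star α)⁻¹ *
          (((1 - γ * α)⁻¹ * γ * (1 - γ * α)) - α)‖ < 1) ∧
    (‖γ‖ = 1 →
      ‖(1 - ((1 - γ * α)⁻¹ * γ * (1 - γ * α)) * star α)⁻¹ *
          (((1 - γ * α)⁻¹ * γ * (1 - γ * α)) - α)‖ = 1) := by
  set c := 1 - γ * α with hc_def
  have hγα : ‖γ * α‖ < 1 := by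
    rw [norm_mul]
    nlinarith [norm_nonneg α, norm_nonneg γ]
  have hc : c ≠ 0 := by
    intro h
    have h1 : (1 : Quaternion ℝ) = γ * α := by rwa [hc_def, sub_eq_zero] at h
    rw [← h1] at hγα
    simp at hγα
  set gl := c⁻¹ * γ * c with hgl_def
  have hgl_norm : ‖gl‖ = ‖γ‖ := by
    rw [hgl_def, norm_mul, norm_mul, norm_inv, inv_mul_eq_div, div_mul_eq_mul_div,
      mul_div_assoc, div_self (norm_ne_zero_iff.mpr hc), mul_one]
  set d := 1 - gl * star α with hd_def
  have hdγα : ‖gl * star α‖ < 1 := by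
    rw [norm_mul, hgl_norm, Quaternion.norm_star]
    nlinarith [norm_nonneg α, norm_nonneg γ]
  have hd : d ≠ 0 := by
    intro h
    have h1 : (1 : Quaternion ℝ) = gl * star α := by rwa [hd_def, sub_eq_zero] at h
    rw [← h1] at hdγα
    simp at hdγα
  have hdnorm : 0 < ‖d‖ := norm_pos_iff.mpr hd
  have hkey : ‖d‖ ^ 2 = ‖gl - α‖ ^ 2 + (1 - ‖α‖ ^ 2) * (1 - ‖γ‖ ^ 2) := by
    have := key_identity α gl
    rw [← hd_def] at this
    simp only [Quaternion.normSq_eq_norm_mul_self] at this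
    rw [hgl_norm] at this
    nlinarith [this]
  have hb : ‖d⁻¹ * (gl - α)‖ ^ 2 = ‖gl - α‖ ^ 2 / ‖d‖ ^ 2 := by
    rw [norm_mul, norm_inv, mul_pow, inv_pow, inv_mul_eq_div]
  have main : 1 - ‖d⁻¹ * (gl - α)‖ ^ 2 = (1 - ‖α‖ ^ 2) * (1 - ‖γ‖ ^ 2) / ‖d‖ ^ 2 := by
    rw [hb]
    field_simp
    linarith [hkey]
  refine ⟨main, ?_, ?_⟩
  · intro hγ1
    have hpos : (0:ℝ) < (1 - ‖α‖ ^ 2) * (1 - ‖γ‖ ^ 2) / ‖d‖ ^ 2 := by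
      apply div_pos
      · exact mul_pos (by nlinarith [norm_nonneg α]) (by nlinarith [norm_nonneg γ])
      · positivity
    nlinarith [norm_nonneg (d⁻¹ * (gl - α)), main]
  · intro hγ1
    have h0 : 1 - ‖d⁻¹ * (gl - α)‖ ^ 2 = 0 := by
      rw [main, hγ1]; simp
    nlinarith [norm_nonneg (d⁻¹ * (gl - α))]
end

section
/- Let A ∈ ℍⁿˣⁿ and v ∈ ℍⁿ (column vector) satisfy A A* + v v* = Iₙ. Then the pair (A, v) is controllable (i.e., the n × n matrix [v, Av, …, A^{n−1}v] is invertible) if and only if Aᵏ (Aᵏ)* → 0 as k → ∞. -/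
open Filter Matrix

section Krylov

variable {K V : Type*} [DivisionRing K] [AddCommGroup V] [Module K V]

private noncomputable def kry (T : V →ₗ[K] V) (x : V) (k : ℕ) : Submodule K V :=
  Submodule.span K ((fun i => (T ^ i) x) '' Set.Iio k)

private lemma kry_mono (T : V →ₗ[K] V) (x : V) {k m : ℕ} (h : k ≤ m) :
    kry T x k ≤ kry T x m :=
  Submodule.span_mono (Set.image_mono (Set.Iio_subset_Iio h))

private lemma mem_kry (T : V →ₗ[K] V) (x : V) {i k : ℕ} (h : i < k) :
    (T ^ i) x ∈ kry T x k :=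
  Submodule.subset_span ⟨i, h, rfl⟩

private lemma kry_succ (T : V →ₗ[K] V) (x : V) (k : ℕ) :
    kry T x (k + 1) = kry T x k ⊔ Submodule.span K {(T ^ k) x} := by
  unfold kry
  rw [← Submodule.span_union]
  congr 1
  rw [show Set.Iio (k+1) = insert k (Set.Iio k) by
    ext a; simp only [Set.mem_Iio, Set.mem_insert_iff]; omega]
  rw [Set.image_insert_eq, Set.union_singleton]

private lemma kry_step (T : V →ₗ[K] V) (x : V) (k : ℕ)
    (h : kry T x (k + 1) = kry T x k) : kry T x (k + 2) = kry T x (k + 1) := by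
  have hmem : (T ^ (k + 1)) x ∈ kry T x (k + 1) := by
    have hx : (T ^ k) x ∈ kry T x k := h ▸ mem_kry T x (Nat.lt_succ_self k)
    have hmap : Submodule.map T (kry T x k) ≤ kry T x (k + 1) := by
      rw [kry, Submodule.map_span, Submodule.span_le]
      rintro y ⟨z, ⟨i, hi, rfl⟩, rfl⟩
      have hTi : T ((T ^ i) x) = (T ^ (i + 1)) x := by
        rw [pow_succ', Module.End.mul_apply]
      rw [hTi]
      exact mem_kry T x (Nat.succ_lt_succ hi)
    have hTk : T ((T ^ k) x) = (T ^ (k + 1)) x := by rw [pow_succ', Module.End.mul_apply]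
    exact hmap ⟨_, hx, hTk⟩
  rw [kry_succ T x (k + 1), sup_eq_left.mpr]
  rwa [Submodule.span_le, Set.singleton_subset_iff]

private lemma kry_stab' (T : V →ₗ[K] V) (x : V) (k : ℕ)
    (h : kry T x (k + 1) = kry T x k) :
    ∀ d, kry T x (k + d + 1) = kry T x (k + d) := by
  intro d
  induction d with
  | zero => exact h
  | succ d ih => exact kry_step T x (k + d) ih

private lemma kry_stab (T : V →ₗ[K] V) (x : V) (k : ℕ)
    (h : kry T x (k + 1) = kry T x k) {m : ℕ} (hm : k ≤ m) :
    kry T x m = kry T x k := by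
  induction m, hm using Nat.le_induction with
  | base => rfl
  | succ m hm ih =>
    obtain ⟨d, rfl⟩ := Nat.exists_eq_add_of_le hm
    rw [kry_stab' T x k h d, ih]

private lemma kry_pow_mem [FiniteDimensional K V] (T : V →ₗ[K] V) (x : V) (j : ℕ) :
    (T ^ j) x ∈ kry T x (Module.finrank K V) := by
  set n := Module.finrank K V with hn
  have hstab : kry T x (n + 1) = kry T x n := by
    by_contra hne
    have hstrict : ∀ k, k ≤ n → kry T x k < kry T x (k + 1) := by
      intro k hk
      refine lt_of_le_of_ne (kry_mono T x (Nat.le_succ k)) fun he => hne ?_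
      exact (kry_stab T x k he.symm (Nat.le_succ_of_le hk)).trans
        (kry_stab T x k he.symm hk).symm
    have hrank : ∀ k, k ≤ n + 1 → k ≤ Module.finrank K (kry T x k) := by
      intro k
      induction k with
      | zero => intro _; exact Nat.zero_le _
      | succ k ih =>
        intro hk
        have h1 := ih (Nat.le_of_succ_le hk)
        have h2 := Submodule.finrank_lt_finrank_of_lt (hstrict k (Nat.lt_succ_iff.mp hk))
        omega
    have := hrank (n + 1) le_rfl
    have hle := Submodule.finrank_le (kry T x (n + 1))
    omega
  have h1 : (T ^ j) x ∈ kry T x (j + 1) := mem_kry T x (Nat.lt_succ_self j)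
  rcases le_or_gt (j + 1) n with hc | hc
  · exact kry_mono T x hc h1
  · rw [← kry_stab T x n hstab (Nat.le_of_lt hc)]
    exact h1

end Krylov

section MatrixDivisionRing

variable {K : Type*} [DivisionRing K] {n : ℕ}

private lemma matrix_isUnit_of_left_inv {C B : Matrix (Fin n) (Fin n) K}
    (h : B * C = 1) : IsUnit C := by
  have hfg : C.vecMulLinear * B.vecMulLinear = 1 := by
    refine LinearMap.ext fun x => ?_
    show (x ᵥ* B) ᵥ* C = x
    rw [Matrix.vecMul_vecMul, h, Matrix.vecMul_one]
  have hgf := mul_eq_one_comm.mp hfg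
  have hCB : C * B = 1 := by
    ext i j
    have h1 := congrFun (LinearMap.congr_fun hgf (Pi.single i 1)) j
    simp only [Module.End.mul_apply, Matrix.vecMulLinear_apply, Matrix.vecMul_vecMul,
      Module.End.one_apply, Matrix.single_one_vecMul] at h1
    rw [show (C * B) i j = ((C.row i) ᵥ* B) j from rfl, h1, Matrix.one_apply, Pi.single_apply]
    simp [eq_comm]
  exact ⟨⟨C, B, hCB, h⟩, rfl⟩

private lemma exists_left_kernel_of_not_isUnit {C : Matrix (Fin n) (Fin n) K}
    (hC : ¬ IsUnit C) : ∃ w : Fin n → K, w ≠ 0 ∧ w ᵥ* C = 0 := by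
  have hni : ¬ Function.Injective C.vecMulLinear := by
    intro hinj
    have hsurj := LinearMap.injective_iff_surjective.mp hinj
    obtain ⟨B, hB⟩ := Matrix.vecMul_surjective_iff_exists_left_inverse.mp hsurj
    exact hC (matrix_isUnit_of_left_inv hB)
  rw [← LinearMap.ker_eq_bot] at hni
  obtain ⟨w, hwmem, hw0⟩ := Submodule.exists_mem_ne_zero_of_ne_bot hni
  exact ⟨w, hw0, hwmem⟩

private lemma vecMulLinear_pow (M : Matrix (Fin n) (Fin n) K) (x : Fin n → K) (j : ℕ) :
    ((M.vecMulLinear) ^ j) x = x ᵥ* (M ^ j) := by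
  induction j generalizing x with
  | zero => simp [Matrix.vecMul_one]
  | succ j ih =>
    rw [pow_succ, Module.End.mul_apply, Matrix.vecMulLinear_apply, ih,
      Matrix.vecMul_vecMul, ← pow_succ']

end MatrixDivisionRing

section Helpers

private lemma quat_coe_sum {ι : Type*} (s : Finset ι) (f : ι → ℝ) :
    ((∑ i ∈ s, f i : ℝ) : Quaternion ℝ) = ∑ i ∈ s, ((f i : ℝ) : Quaternion ℝ) := by
  induction s using Finset.cons_induction with
  | empty => simp
  | cons a s ha ih => rw [Finset.sum_cons, Finset.sum_cons, ← ih]; push_cast; ring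

private lemma star_dot {n : ℕ} (u y : Fin n → Quaternion ℝ) :
    star (u ⬝ᵥ y) = star y ⬝ᵥ star u := by
  simp [dotProduct, star_sum, StarMul.star_mul]

private lemma vecMulVec_mulVec' {n : ℕ} (a b x : Fin n → Quaternion ℝ) :
    Matrix.vecMulVec a b *ᵥ x = fun i => a i * (b ⬝ᵥ x) := by
  funext i
  simp [Matrix.vecMulVec_apply, Matrix.mulVec, dotProduct, Finset.mul_sum, mul_assoc]

private lemma outer_conj {n : ℕ} (M : Matrix (Fin n) (Fin n) (Quaternion ℝ))
    (v : Fin n → Quaternion ℝ) :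
    M * Matrix.vecMulVec v (star v) * Mᴴ
      = Matrix.vecMulVec (M *ᵥ v) (star (M *ᵥ v)) := by
  refine Matrix.ext fun i j => ?_
  simp only [Matrix.mul_apply, Matrix.vecMulVec_apply, Matrix.conjTranspose_apply,
    Matrix.mulVec, dotProduct, Pi.star_apply, star_sum, StarMul.star_mul, Finset.mul_sum,
    Finset.sum_mul, mul_assoc]

private lemma entry_tendsto {n : ℕ} {f : ℕ → Matrix (Fin n) (Fin n) (Quaternion ℝ)}
    (h : Tendsto f atTop (nhds 0)) (i j : Fin n) :
    Tendsto (fun k => f k i j) atTop (nhds 0) := by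
  replace h := tendsto_pi_nhds.mp h
  have h2 := h i
  rw [tendsto_pi_nhds] at h2
  exact h2 j

end Helpers

/-- For A ∈ ℍⁿˣⁿ and v ∈ ℍⁿ with AA* + vv* = I, the pair (A, v) is controllable
(the controllability matrix [v, Av, …, Aⁿ⁻¹v] is invertible) iff Aᵏ(Aᵏ)* → 0. -/
theorem controllable_iff_stable (n : ℕ) (A : Matrix (Fin n) (Fin n) (Quaternion ℝ))
    (v : Fin n → Quaternion ℝ)
    (h : A * Aᴴ + Matrix.vecMulVec v (star v) = 1) :
    IsUnit (Matrix.of fun i j : Fin n => ((A ^ (j : ℕ)).mulVec v) i) ↔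
      Tendsto (fun k : ℕ => A ^ k * (A ^ k)ᴴ) atTop (nhds 0) := by
  set C : Matrix (Fin n) (Fin n) (Quaternion ℝ) :=
    Matrix.of fun i j : Fin n => ((A ^ (j : ℕ)).mulVec v) i with hCdef
  have hrec : ∀ k : ℕ, A ^ (k+1) * (A ^ (k+1))ᴴ
      = A ^ k * (A ^ k)ᴴ - Matrix.vecMulVec (A ^ k *ᵥ v) (star (A ^ k *ᵥ v)) := by
    intro k
    have h1 : A * Aᴴ = 1 - Matrix.vecMulVec v (star v) := eq_sub_of_add_eq h
    calc A ^ (k+1) * (A ^ (k+1))ᴴ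
        = A ^ k * (A * Aᴴ) * (A ^ k)ᴴ := by
          rw [pow_succ, Matrix.conjTranspose_mul, mul_assoc, mul_assoc, mul_assoc]
      _ = A ^ k * (A ^ k)ᴴ - A ^ k * Matrix.vecMulVec v (star v) * (A ^ k)ᴴ := by
          rw [h1, Matrix.mul_sub, Matrix.sub_mul, mul_one]
      _ = A ^ k * (A ^ k)ᴴ - Matrix.vecMulVec (A ^ k *ᵥ v) (star (A ^ k *ᵥ v)) := by
          rw [outer_conj]
  constructor
  · -- controllable → stable
    intro hU
    obtain ⟨U, hUC⟩ := hU
    set B : Matrix (Fin n) (Fin n) (Quaternion ℝ) := U.inv with hBdef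
    have hCB : C * B = 1 := by rw [← hUC]; exact U.val_inv
    -- Step 1: each entry of A^k v tends to 0
    have hv0 : ∀ i : Fin n, Tendsto (fun k => (A ^ k *ᵥ v) i) atTop (nhds 0) := by
      intro i
      set d : ℕ → ℝ := fun k => ∑ l, Quaternion.normSq ((A ^ k) i l) with hd
      have hdiag : ∀ k, (A ^ k * (A ^ k)ᴴ) i i = ((d k : ℝ) : Quaternion ℝ) := by
        intro k
        simp only [Matrix.mul_apply, Matrix.conjTranspose_apply, hd,
          Quaternion.self_mul_star, quat_coe_sum]
      have hstep : ∀ k, d (k + 1) = d k - Quaternion.normSq ((A ^ k *ᵥ v) i) := by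
        intro k
        have h2 := congrFun (congrFun (hrec k) i) i
        rw [Matrix.sub_apply, hdiag, hdiag, Matrix.vecMulVec_apply, Pi.star_apply,
          Quaternion.self_mul_star] at h2
        have h3 : ((d (k+1) : ℝ) : Quaternion ℝ)
            = ((d k - Quaternion.normSq ((A ^ k *ᵥ v) i) : ℝ) : Quaternion ℝ) := by
          rw [h2]; push_cast [Quaternion.coe_sub]; ring
        exact Quaternion.coe_injective h3
      have hdnn : ∀ k, 0 ≤ d k := fun k =>
        Finset.sum_nonneg fun l _ => Quaternion.normSq_nonneg
      have hsum : ∀ k, ∑ m ∈ Finset.range k, Quaternion.normSq ((A ^ m *ᵥ v) i)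
          = d 0 - d k := by
        intro k
        induction k with
        | zero => simp
        | succ k ih => rw [Finset.sum_range_succ, ih, hstep]; ring
      have hsummable : Summable (fun m => Quaternion.normSq ((A ^ m *ᵥ v) i)) := by
        apply summable_of_sum_range_le (c := d 0)
          (fun m => Quaternion.normSq_nonneg)
        intro k
        rw [hsum k]
        linarith [hdnn k]
      have hns0 := hsummable.tendsto_atTop_zero
      rw [tendsto_zero_iff_norm_tendsto_zero]
      have hnorm : ∀ k : ℕ, ‖(A ^ k *ᵥ v) i‖
          = Real.sqrt (Quaternion.normSq ((A ^ k *ᵥ v) i)) := by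
        intro k
        rw [Quaternion.normSq_eq_norm_mul_self, Real.sqrt_mul_self (norm_nonneg _)]
      simp only [hnorm]
      have := (Real.continuous_sqrt.tendsto 0).comp hns0
      simpa [Function.comp_def] using this
    -- Step 2: A^k → 0
    have hAk : Tendsto (fun k => A ^ k) atTop (nhds 0) := by
      refine tendsto_pi_nhds.mpr ?_
      intro i
      rw [tendsto_pi_nhds]
      intro j
      have hkey : ∀ k, (A ^ k) i j = ∑ l : Fin n, (A ^ (k + (l : ℕ)) *ᵥ v) i * B l j := by
        intro k
        conv_lhs => rw [show A ^ k = A ^ k * C * B by rw [mul_assoc, hCB, mul_one]]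
        rw [Matrix.mul_apply]
        refine Finset.sum_congr rfl fun l _ => ?_
        congr 1
        rw [Matrix.mul_apply]
        have : ∀ m, (A ^ k) i m * C m l = (A ^ k) i m * (A ^ (l : ℕ) *ᵥ v) m := fun m => rfl
        simp only [this]
        rw [show (∑ m, (A ^ k) i m * (A ^ (l : ℕ) *ᵥ v) m) = (A ^ k *ᵥ (A ^ (l : ℕ) *ᵥ v)) i
          from rfl, Matrix.mulVec_mulVec, ← pow_add]
      have hlim : Tendsto (fun k => ∑ l : Fin n, (A ^ (k + (l : ℕ)) *ᵥ v) i * B l j)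
          atTop (nhds 0) := by
        have : Tendsto (fun k => ∑ l : Fin n, (A ^ (k + (l : ℕ)) *ᵥ v) i * B l j)
            atTop (nhds (∑ l : Fin n, 0)) := by
          apply tendsto_finset_sum
          intro l _
          have h1 : Tendsto (fun k => (A ^ (k + (l : ℕ)) *ᵥ v) i) atTop (nhds 0) :=
            (hv0 i).comp (tendsto_add_atTop_nat (l : ℕ))
          simpa using h1.mul_const (B l j)
        simpa using this
      have hz : (0 : Matrix (Fin n) (Fin n) (Quaternion ℝ)) i j = 0 := rfl
      rw [hz]
      exact hlim.congr fun k => (hkey k).symm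
    -- Step 3: conclude
    have hcont : Continuous (fun p : Matrix (Fin n) (Fin n) (Quaternion ℝ) ×
        Matrix (Fin n) (Fin n) (Quaternion ℝ) => p.1 * p.2ᴴ) :=
      continuous_fst.matrix_mul continuous_snd.matrix_conjTranspose
    have h2 := (hcont.tendsto (0, 0)).comp (hAk.prodMk_nhds hAk)
    simpa only [Function.comp_def, Matrix.conjTranspose_zero, mul_zero] using h2
  · -- stable → controllable
    intro hstab
    by_contra hC
    obtain ⟨w, hw0, hwC⟩ := exists_left_kernel_of_not_isUnit hC
    -- w ⬝ᵥ A^m v = 0 for m < n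
    have hjn : ∀ m : ℕ, m < n → w ⬝ᵥ (A ^ m *ᵥ v) = 0 := by
      intro m hm
      have h1 := congrFun hwC ⟨m, hm⟩
      simpa [Matrix.vecMul, dotProduct, Matrix.mulVec, hCdef] using h1
    -- extend to all m via Krylov
    have hjall : ∀ m : ℕ, w ⬝ᵥ (A ^ m *ᵥ v) = 0 := by
      set T : (Fin n → Quaternion ℝ) →ₗ[Quaternion ℝ] (Fin n → Quaternion ℝ) :=
        (Aᴴ).vecMulLinear with hT
      have hTpow : ∀ j, (T ^ j) (star v) = star v ᵥ* ((Aᴴ) ^ j) := fun j =>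
        vecMulLinear_pow Aᴴ (star v) j
      have hstarform : ∀ m, star (w ⬝ᵥ (A ^ m *ᵥ v)) = ((T ^ m) (star v)) ⬝ᵥ star w := by
        intro m
        rw [star_dot, Matrix.star_mulVec, Matrix.conjTranspose_pow, hTpow]
      set φ : (Fin n → Quaternion ℝ) →ₗ[Quaternion ℝ] Quaternion ℝ :=
        { toFun := fun x => x ⬝ᵥ star w
          map_add' := fun x y => add_dotProduct x y (star w)
          map_smul' := fun c x => smul_dotProduct c x (star w) } with hφ
      have hker : ∀ y ∈ kry T (star v) n, φ y = 0 := by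
        have hle : kry T (star v) n ≤ LinearMap.ker φ := by
          rw [kry, Submodule.span_le]
          rintro y ⟨i, hi, rfl⟩
          rw [SetLike.mem_coe, LinearMap.mem_ker]
          show ((T ^ i) (star v)) ⬝ᵥ star w = 0
          rw [← hstarform, hjn i hi, star_zero]
        intro y hy
        exact LinearMap.mem_ker.mp (hle hy)
      intro m
      have hfr : Module.finrank (Quaternion ℝ) (Fin n → Quaternion ℝ) = n :=
        Module.finrank_fin_fun (Quaternion ℝ)
      have hmem := kry_pow_mem T (star v) m
      rw [hfr] at hmem
      have := hker _ hmem
      have h2 : star (w ⬝ᵥ (A ^ m *ᵥ v)) = 0 := by rw [hstarform]; exact this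
      exact star_eq_zero.mp h2
    -- the invariant sequence
    have hs : ∀ k : ℕ, w ⬝ᵥ ((A ^ k * (A ^ k)ᴴ) *ᵥ star w) = w ⬝ᵥ star w := by
      intro k
      induction k with
      | zero => simp
      | succ k ih =>
        rw [hrec k, Matrix.sub_mulVec, dotProduct_sub, ih]
        have hzero : w ⬝ᵥ (Matrix.vecMulVec (A ^ k *ᵥ v) (star (A ^ k *ᵥ v)) *ᵥ star w)
            = 0 := by
          rw [vecMulVec_mulVec']
          have h1 : star (A ^ k *ᵥ v) ⬝ᵥ star w = 0 := by
            rw [← star_dot, hjall k, star_zero]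
          simp [h1]
        rw [hzero, sub_zero]
    -- contradiction via the limit
    have hlim : Tendsto (fun k => w ⬝ᵥ ((A ^ k * (A ^ k)ᴴ) *ᵥ star w)) atTop (nhds 0) := by
      have hform : ∀ k : ℕ, w ⬝ᵥ ((A ^ k * (A ^ k)ᴴ) *ᵥ star w)
          = ∑ i : Fin n, ∑ j : Fin n, w i * ((A ^ k * (A ^ k)ᴴ) i j * star (w j)) := by
        intro k
        simp [dotProduct, Matrix.mulVec, Finset.mul_sum, Pi.star_apply]
      have h0 : Tendsto (fun k : ℕ => ∑ i : Fin n, ∑ j : Fin n,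
            w i * ((A ^ k * (A ^ k)ᴴ) i j * star (w j)))
          atTop (nhds (∑ i : Fin n, ∑ j : Fin n, (0 : Quaternion ℝ))) := by
        apply tendsto_finset_sum
        intro i _
        apply tendsto_finset_sum
        intro j _
        have h1 := (entry_tendsto hstab i j).mul_const (star (w j))
        have h2 := h1.const_mul (w i)
        simpa using h2
      simp only [hform]
      simpa using h0
    have heq : w ⬝ᵥ star w = 0 := by
      have hconst : Tendsto (fun _ : ℕ => w ⬝ᵥ star w) atTop (nhds (w ⬝ᵥ star w)) :=
        tendsto_const_nhds
      exact tendsto_nhds_unique hconst (hlim.congr fun k => hs k)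
    -- w ⬝ᵥ star w = 0 → w = 0
    have hwzero : w = 0 := by
      have hcoe : w ⬝ᵥ star w = ((∑ i, Quaternion.normSq (w i) : ℝ) : Quaternion ℝ) := by
        simp only [dotProduct, Pi.star_apply, Quaternion.self_mul_star]
        rw [quat_coe_sum]
      rw [hcoe] at heq
      have hreal : (∑ i, Quaternion.normSq (w i) : ℝ) = 0 := by
        have := congrArg QuaternionAlgebra.re heq
        have h0 : QuaternionAlgebra.re (0 : Quaternion ℝ) = 0 := rfl
        simpa [h0] using this
      have hall : ∀ i ∈ Finset.univ, Quaternion.normSq (w i) = 0 :=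
        (Finset.sum_eq_zero_iff_of_nonneg
          (fun i _ => Quaternion.normSq_nonneg)).mp hreal
      funext i
      exact Quaternion.normSq_eq_zero.mp (hall i (Finset.mem_univ i))
    exact hw0 hwzero
end

section
/- Let A ∈ ℍⁿˣⁿ be stable (Aᵏ → 0 as k → ∞) and v ∈ ℍⁿ. Then the Stein equation P − A P A* = v v* has a unique Hermitian solution, given by the convergent series P = Σ_{k≥0} Aᵏ v v* (Aᵏ)*, and P is positive semidefinite; if in addition the pair (A, v) is controllable then P is positive definite. -/
set_option maxHeartbeats 1000000

open Filter Matrix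

namespace SteinAux

variable {n : ℕ}

/-- Total (entrywise) L1 norm of a quaternionic matrix. -/
noncomputable def Nm (B : Matrix (Fin n) (Fin n) (Quaternion ℝ)) : ℝ :=
  ∑ i, ∑ j, ‖B i j‖

lemma Nm_nonneg (B : Matrix (Fin n) (Fin n) (Quaternion ℝ)) : 0 ≤ Nm B := by
  apply Finset.sum_nonneg; intro i _
  exact Finset.sum_nonneg fun j _ => norm_nonneg _

lemma entry_le_Nm (B : Matrix (Fin n) (Fin n) (Quaternion ℝ)) (i j : Fin n) :
    ‖B i j‖ ≤ Nm B := by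
  calc ‖B i j‖ ≤ ∑ j', ‖B i j'‖ :=
        Finset.single_le_sum (fun j' _ => norm_nonneg _) (Finset.mem_univ j)
    _ ≤ Nm B :=
        Finset.single_le_sum (f := fun i' => ∑ j', ‖B i' j'‖)
          (fun i' _ => Finset.sum_nonneg fun j' _ => norm_nonneg _) (Finset.mem_univ i)

lemma Nm_mul_le (B C : Matrix (Fin n) (Fin n) (Quaternion ℝ)) :
    Nm (B * C) ≤ Nm B * Nm C := by
  calc Nm (B * C) ≤ ∑ i, ∑ j, ∑ p, ‖B i p‖ * ‖C p j‖ := by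
        apply Finset.sum_le_sum; intro i _
        apply Finset.sum_le_sum; intro j _
        calc ‖(B * C) i j‖ = ‖∑ p, B i p * C p j‖ := by rw [Matrix.mul_apply]
          _ ≤ ∑ p, ‖B i p * C p j‖ := norm_sum_le _ _
          _ = ∑ p, ‖B i p‖ * ‖C p j‖ := by simp [norm_mul]
    _ = ∑ i, ∑ p, ‖B i p‖ * ∑ j, ‖C p j‖ := by
        apply Finset.sum_congr rfl; intro i _
        rw [Finset.sum_comm]
        exact Finset.sum_congr rfl fun p _ => (Finset.mul_sum _ _ _).symm
    _ ≤ ∑ i, ∑ p, ‖B i p‖ * Nm C := by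
        apply Finset.sum_le_sum; intro i _
        apply Finset.sum_le_sum; intro p _
        apply mul_le_mul_of_nonneg_left _ (norm_nonneg _)
        exact Finset.single_le_sum (f := fun p' => ∑ j, ‖C p' j‖)
          (fun p' _ => Finset.sum_nonneg fun j _ => norm_nonneg _) (Finset.mem_univ p)
    _ = Nm B * Nm C := by
        simp only [Nm, Finset.sum_mul]

lemma entry_bound (B M : Matrix (Fin n) (Fin n) (Quaternion ℝ)) (b : ℝ) (hb0 : 0 ≤ b)
    (hb : ∀ i j, ‖B i j‖ ≤ b) (i j : Fin n) :
    ‖(B * M * Bᴴ) i j‖ ≤ b * b * Nm M := by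
  have h1 : (B * M * Bᴴ) i j = ∑ q, (∑ p, B i p * M p q) * star (B j q) := by
    simp [Matrix.mul_apply, Matrix.conjTranspose_apply]
  calc ‖(B * M * Bᴴ) i j‖ ≤ ∑ q, ‖(∑ p, B i p * M p q) * star (B j q)‖ := by
        rw [h1]; exact norm_sum_le _ _
    _ = ∑ q, ‖∑ p, B i p * M p q‖ * ‖B j q‖ := by simp [norm_mul]
    _ ≤ ∑ q, (∑ p, ‖B i p‖ * ‖M p q‖) * b := by
        apply Finset.sum_le_sum; intro q _
        apply mul_le_mul _ (hb j q) (norm_nonneg _)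
          (Finset.sum_nonneg fun p _ => mul_nonneg (norm_nonneg _) (norm_nonneg _))
        calc ‖∑ p, B i p * M p q‖ ≤ ∑ p, ‖B i p * M p q‖ := norm_sum_le _ _
          _ = ∑ p, ‖B i p‖ * ‖M p q‖ := by simp [norm_mul]
    _ ≤ ∑ q, (∑ p, b * ‖M p q‖) * b := by
        apply Finset.sum_le_sum; intro q _
        apply mul_le_mul_of_nonneg_right _ hb0
        exact Finset.sum_le_sum fun p _ =>
          mul_le_mul_of_nonneg_right (hb i p) (norm_nonneg _)
    _ = b * b * Nm M := by
        rw [Nm, Finset.sum_comm (s := Finset.univ) (t := Finset.univ)]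
        rw [Finset.mul_sum]
        apply Finset.sum_congr rfl; intro q _
        rw [Finset.sum_mul, Finset.mul_sum]
        apply Finset.sum_congr rfl; intro p _
        ring

lemma geom_decay (A : Matrix (Fin n) (Fin n) (Quaternion ℝ))
    (hA : Tendsto (fun k : ℕ => A ^ k) atTop (nhds 0)) :
    ∃ C : ℝ, 0 < C ∧ ∃ r : ℝ, 0 < r ∧ r < 1 ∧ ∀ k : ℕ, Nm (A ^ k) ≤ C * r ^ k := by
  -- entrywise convergence of norms
  have hent : ∀ i j : Fin n, Tendsto (fun k : ℕ => ‖(A ^ k) i j‖) atTop (nhds 0) := by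
    intro i j
    have h1 : Tendsto (fun k : ℕ => (A ^ k) i j) atTop (nhds 0) := by
      have := (tendsto_pi_nhds.1 hA i)
      have := (tendsto_pi_nhds.1 this j)
      simpa using this
    simpa using h1.norm
  have hNm : Tendsto (fun k : ℕ => Nm (A ^ k)) atTop (nhds 0) := by
    have : Tendsto (fun k : ℕ => ∑ i : Fin n, ∑ j : Fin n, ‖(A ^ k) i j‖) atTop
        (nhds (∑ i : Fin n, ∑ j : Fin n, (0 : ℝ))) := by
      apply tendsto_finset_sum; intro i _
      exact tendsto_finset_sum _ fun j _ => hent i j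
    simpa [Nm] using this
  -- pick m ≥ 1 with Nm (A^m) ≤ 1/2
  obtain ⟨m₀, hm₀⟩ := (hNm.eventually (eventually_le_nhds (by norm_num : (0:ℝ) < 1/2))).exists_forall_of_atTop
  set m := m₀ + 1 with hm
  have hmpos : 0 < m := Nat.succ_pos _
  have hhalf : Nm (A ^ m) ≤ 1 / 2 := hm₀ m (Nat.le_succ _)
  -- powers of A^m decay
  have hpow : ∀ q : ℕ, Nm ((A ^ m) ^ q) ≤ (Nm (A ^ 0) + 1) * (1 / 2) ^ q := by
    intro q
    induction q with
    | zero => simp only [pow_zero, mul_one]; linarith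
    | succ q ih =>
      calc Nm ((A ^ m) ^ (q + 1)) = Nm ((A ^ m) ^ q * A ^ m) := by rw [pow_succ]
        _ ≤ Nm ((A ^ m) ^ q) * Nm (A ^ m) := Nm_mul_le _ _
        _ ≤ ((Nm (A ^ 0) + 1) * (1 / 2) ^ q) * (1 / 2) := by
            apply mul_le_mul ih hhalf (Nm_nonneg _)
            have := Nm_nonneg (A ^ 0)
            positivity
        _ = (Nm (A ^ 0) + 1) * (1 / 2) ^ (q + 1) := by ring
  -- remainder bound
  set C₀ : ℝ := (∑ s ∈ Finset.range m, Nm (A ^ s)) + 1 with hC₀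
  have hC₀pos : 0 < C₀ := by
    have : 0 ≤ ∑ s ∈ Finset.range m, Nm (A ^ s) :=
      Finset.sum_nonneg fun s _ => Nm_nonneg _
    linarith
  have hrem : ∀ s, s < m → Nm (A ^ s) ≤ C₀ := by
    intro s hs
    have : Nm (A ^ s) ≤ ∑ s' ∈ Finset.range m, Nm (A ^ s') :=
      Finset.single_le_sum (fun s' _ => Nm_nonneg _) (Finset.mem_range.2 hs)
    linarith
  -- combine: Nm (A^k) ≤ (Nm 1 + 1) * C₀ * (1/2)^(k/m)
  have hkey : ∀ k : ℕ, Nm (A ^ k) ≤ ((Nm (A ^ 0) + 1) * C₀) * (1 / 2 : ℝ) ^ (k / m) := by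
    intro k
    have hdec : A ^ k = (A ^ m) ^ (k / m) * A ^ (k % m) := by
      rw [← pow_mul, ← pow_add, Nat.div_add_mod]
    calc Nm (A ^ k) ≤ Nm ((A ^ m) ^ (k / m)) * Nm (A ^ (k % m)) := by
          rw [hdec]; exact Nm_mul_le _ _
      _ ≤ ((Nm (A ^ 0) + 1) * (1 / 2) ^ (k / m)) * C₀ := by
          apply mul_le_mul (hpow _) (hrem _ (Nat.mod_lt _ hmpos)) (Nm_nonneg _)
          have := Nm_nonneg (A ^ 0)
          positivity
      _ = ((Nm (A ^ 0) + 1) * C₀) * (1 / 2 : ℝ) ^ (k / m) := by ring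
  -- convert floor-division exponent into genuine geometric decay via rpow
  set r : ℝ := (1 / 2 : ℝ) ^ ((1 : ℝ) / m) with hr
  have hr0 : 0 < r := Real.rpow_pos_of_pos (by norm_num) _
  have hr1 : r < 1 := Real.rpow_lt_one (by norm_num) (by norm_num) (by positivity)
  have hconv : ∀ k : ℕ, (1 / 2 : ℝ) ^ (k / m) ≤ 2 * r ^ k := by
    intro k
    have hmR : (0:ℝ) < (m : ℝ) := by exact_mod_cast hmpos
    have hrk : r ^ k = (1 / 2 : ℝ) ^ ((k : ℝ) / m) := by
      rw [hr, ← Real.rpow_natCast ((1/2 : ℝ) ^ ((1:ℝ)/m)) k, ← Real.rpow_mul (by norm_num)]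
      congr 1
      field_simp
    have hfloor : (k : ℝ) / m - 1 ≤ ((k / m : ℕ) : ℝ) := by
      have h1 : k < m * (k / m) + m := by
        conv_lhs => rw [← Nat.div_add_mod k m]
        exact Nat.add_lt_add_left (Nat.mod_lt _ hmpos) _
      have h2 : (k : ℝ) < m * ((k / m : ℕ) : ℝ) + m := by exact_mod_cast h1
      rw [div_sub_one (ne_of_gt hmR), div_le_iff₀ hmR]
      nlinarith
    have hnat : ((1:ℝ)/2) ^ (k / m) = (1/2 : ℝ) ^ (((k / m : ℕ) : ℝ)) := by
      rw [Real.rpow_natCast]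
    rw [hnat, hrk]
    have hle : (1/2 : ℝ) ^ (((k / m : ℕ)) : ℝ) ≤ (1/2 : ℝ) ^ ((k:ℝ)/m - 1) :=
      Real.rpow_le_rpow_of_exponent_ge (by norm_num) (by norm_num) hfloor
    refine hle.trans (le_of_eq ?_)
    rw [Real.rpow_sub (by norm_num), Real.rpow_one]
    ring
  refine ⟨2 * ((Nm (A ^ 0) + 1) * C₀) + 1, by nlinarith [Nm_nonneg (A ^ 0), hC₀pos], r, hr0, hr1, fun k => ?_⟩
  have h1 := hkey k
  have h2 := hconv k
  have h3 : (0:ℝ) ≤ (Nm (A ^ 0) + 1) * C₀ := by nlinarith [Nm_nonneg (A ^ 0), hC₀pos]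
  have h4 : (0:ℝ) ≤ r ^ k := by positivity
  calc Nm (A ^ k) ≤ (Nm (A ^ 0) + 1) * C₀ * ((1 / 2) ^ (k / m)) := h1
    _ ≤ (Nm (A ^ 0) + 1) * C₀ * (2 * r ^ k) := mul_le_mul_of_nonneg_left h2 h3
    _ ≤ (2 * ((Nm (A ^ 0) + 1) * C₀) + 1) * r ^ k := by nlinarith

/-- Quadratic form of a sandwiched rank-one matrix. -/
lemma qf_eq (B : Matrix (Fin n) (Fin n) (Quaternion ℝ)) (v x : Fin n → Quaternion ℝ) :
    star x ⬝ᵥ (B * vecMulVec v (star v) * Bᴴ) *ᵥ x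
      = (star x ⬝ᵥ B *ᵥ v) * star (star x ⬝ᵥ B *ᵥ v) := by
  set y : Fin n → Quaternion ℝ := Bᴴ *ᵥ x with hy
  have hsy : star y = star x ᵥ* B := by
    rw [hy, star_mulVec, conjTranspose_conjTranspose]
  have h1 : star x ⬝ᵥ (B * vecMulVec v (star v) * Bᴴ) *ᵥ x
      = star y ⬝ᵥ (vecMulVec v (star v)) *ᵥ y := by
    rw [← Matrix.mulVec_mulVec, ← Matrix.mulVec_mulVec, Matrix.dotProduct_mulVec, ← hsy, ← hy]
  have h2 : (vecMulVec v (star v)) *ᵥ y = fun i => v i * (star v ⬝ᵥ y) := by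
    funext i
    simp only [Matrix.mulVec, dotProduct, Matrix.vecMulVec_apply, Pi.star_apply,
      Finset.mul_sum, mul_assoc]
  have h3 : star y ⬝ᵥ (fun i => v i * (star v ⬝ᵥ y)) = (star y ⬝ᵥ v) * (star v ⬝ᵥ y) := by
    simp only [dotProduct, Pi.star_apply, Finset.sum_mul, mul_assoc]
  have h4 : star v ⬝ᵥ y = star (star y ⬝ᵥ v) := star_dotProduct _ _
  have h5 : star y ⬝ᵥ v = star x ⬝ᵥ B *ᵥ v := by
    rw [hsy, ← Matrix.dotProduct_mulVec]
  rw [h1, h2, h3, h4, h5]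

end SteinAux

open SteinAux in
/-- For stable A ∈ ℍⁿˣⁿ (Aᵏ → 0) and v ∈ ℍⁿ, the Stein equation P − APA* = vv*
has a unique Hermitian solution, given by the convergent series
P = Σ Aᵏvv*(Aᵏ)*; P is positive semidefinite, and positive definite when the
pair (A, v) is controllable. -/
theorem stein_equation_solution (n : ℕ) (A : Matrix (Fin n) (Fin n) (Quaternion ℝ))
    (v : Fin n → Quaternion ℝ)
    (hA : Tendsto (fun k : ℕ => A ^ k) atTop (nhds 0)) :
    ∃ P : Matrix (Fin n) (Fin n) (Quaternion ℝ),
      Pᴴ = P ∧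
      P - A * P * Aᴴ = Matrix.vecMulVec v (star v) ∧
      (∀ Q : Matrix (Fin n) (Fin n) (Quaternion ℝ),
        Qᴴ = Q → Q - A * Q * Aᴴ = Matrix.vecMulVec v (star v) → Q = P) ∧
      HasSum (fun k : ℕ => A ^ k * Matrix.vecMulVec v (star v) * (A ^ k)ᴴ) P ∧
      (∀ x : Fin n → Quaternion ℝ, 0 ≤ (dotProduct (star x) (P.mulVec x)).re) ∧
      (IsUnit (Matrix.of fun i j : Fin n => ((A ^ (j : ℕ)).mulVec v) i) →
        ∀ x : Fin n → Quaternion ℝ, x ≠ 0 →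
          0 < (dotProduct (star x) (P.mulVec x)).re) := by
  classical
  set M : Matrix (Fin n) (Fin n) (Quaternion ℝ) := Matrix.vecMulVec v (star v) with hM
  set f : ℕ → Matrix (Fin n) (Fin n) (Quaternion ℝ) := fun k => A ^ k * M * (A ^ k)ᴴ with hf
  -- geometric decay
  obtain ⟨C, hC0, r, hr0, hr1, hbound⟩ := geom_decay A hA
  have hentry : ∀ (k : ℕ) (i j : Fin n), ‖(A ^ k) i j‖ ≤ C * r ^ k :=
    fun k i j => (entry_le_Nm _ i j).trans (hbound k)
  have hfb : ∀ (k : ℕ) (i j : Fin n), ‖f k i j‖ ≤ (C * C * Nm M) * (r * r) ^ k := by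
    intro k i j
    have := entry_bound (A ^ k) M (C * r ^ k) (by positivity) (hentry k) i j
    calc ‖f k i j‖ ≤ (C * r ^ k) * (C * r ^ k) * Nm M := this
      _ = (C * C * Nm M) * (r * r) ^ k := by rw [mul_pow]; ring
  have hgsum : Summable fun k : ℕ => (C * C * Nm M) * (r * r) ^ k := by
    apply Summable.mul_left
    exact summable_geometric_of_lt_one (by positivity) (by nlinarith)
  have hsummable : ∀ i j : Fin n, Summable fun k : ℕ => f k i j := fun i j =>
    Summable.of_norm_bounded hgsum (fun k => hfb k i j)
  set P : Matrix (Fin n) (Fin n) (Quaternion ℝ) :=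
    Matrix.of fun i j => ∑' k : ℕ, f k i j with hPdef
  have hP : HasSum f P := by
    refine Pi.hasSum.2 fun i => ?_; refine Pi.hasSum.2 fun j => ?_
    exact (hsummable i j).hasSum
  -- Hermitian-ness of M and f k
  have hMH : Mᴴ = M := by
    refine Matrix.ext fun i j => ?_
    simp only [hM, Matrix.conjTranspose_apply, Matrix.vecMulVec_apply, Pi.star_apply,
      StarMul.star_mul, star_star]
  have hfH : ∀ k, (f k)ᴴ = f k := by
    intro k
    simp only [hf, Matrix.conjTranspose_mul, Matrix.conjTranspose_conjTranspose, hMH,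
      Matrix.mul_assoc]
  have hPH : Pᴴ = P := by
    have h1 : HasSum (fun k => (f k)ᴴ) Pᴴ := hP.matrix_conjTranspose
    have heq : (fun k => (f k)ᴴ) = f := funext hfH
    rw [heq] at h1
    exact h1.unique hP
  -- Stein equation
  have hshiftval : ∀ k, A * f k * Aᴴ = f (k + 1) := by
    intro k
    simp only [hf, pow_succ', Matrix.conjTranspose_mul, Matrix.mul_assoc]
  have hmul : HasSum (fun k => f (k + 1)) (A * P * Aᴴ) := by
    have hcont : Continuous fun X : Matrix (Fin n) (Fin n) (Quaternion ℝ) => A * X * Aᴴ :=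
      (continuous_const.matrix_mul continuous_id).matrix_mul continuous_const
    let φ : Matrix (Fin n) (Fin n) (Quaternion ℝ) →+ Matrix (Fin n) (Fin n) (Quaternion ℝ) :=
      AddMonoidHom.mk' (fun X => A * X * Aᴴ) (fun X Y => by simp only [mul_add, add_mul])
    have hmap := hP.map φ (by exact hcont)
    have hmap' : HasSum (fun k => A * f k * Aᴴ) (A * P * Aᴴ) := hmap
    have heq : (fun k => A * f k * Aᴴ) = fun k => f (k + 1) := funext hshiftval
    rwa [heq] at hmap'
  have hshift : HasSum (fun k => f (k + 1)) (P - f 0) := by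
    refine (hasSum_nat_add_iff 1).2 ?_
    rw [Finset.sum_range_one, sub_add_cancel]
    exact hP
  have hf0 : f 0 = M := by
    simp [hf]
  have hstein : P - A * P * Aᴴ = M := by
    have := hmul.unique hshift
    rw [this, hf0]
    abel
  -- uniqueness
  have huniq : ∀ Q : Matrix (Fin n) (Fin n) (Quaternion ℝ),
      Qᴴ = Q → Q - A * Q * Aᴴ = M → Q = P := by
    intro Q _ hQ2
    have hQ' : Q = M + A * Q * Aᴴ := eq_add_of_sub_eq hQ2
    have hrec : ∀ N : ℕ, Q = (∑ k ∈ Finset.range N, f k) + A ^ N * Q * (A ^ N)ᴴ := by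
      intro N
      induction N with
      | zero => simp
      | succ N ih =>
        have key : A ^ N * Q * (A ^ N)ᴴ = f N + A ^ (N + 1) * Q * (A ^ (N + 1))ᴴ := by
          conv_lhs => rw [hQ']
          simp only [mul_add, add_mul, pow_succ, Matrix.conjTranspose_mul,
            Matrix.mul_assoc, hf]
        rw [Finset.sum_range_succ]
        calc Q = (∑ k ∈ Finset.range N, f k) + A ^ N * Q * (A ^ N)ᴴ := ih
          _ = (∑ k ∈ Finset.range N, f k) + (f N + A ^ (N + 1) * Q * (A ^ (N + 1))ᴴ) := by
              rw [key]
          _ = (∑ k ∈ Finset.range N, f k) + f N + A ^ (N + 1) * Q * (A ^ (N + 1))ᴴ := by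
              rw [add_assoc]
    have hT1 : Tendsto (fun N => ∑ k ∈ Finset.range N, f k) atTop (nhds P) :=
      hP.tendsto_sum_nat
    have hT2 : Tendsto (fun N : ℕ => A ^ N * Q * (A ^ N)ᴴ) atTop (nhds 0) := by
      have hc : Continuous fun B : Matrix (Fin n) (Fin n) (Quaternion ℝ) => B * Q * Bᴴ :=
        (continuous_id.matrix_mul continuous_const).matrix_mul
          continuous_id.matrix_conjTranspose
      have ht : Tendsto (fun N : ℕ => A ^ N * Q * (A ^ N)ᴴ) atTop
          (nhds ((0 : Matrix (Fin n) (Fin n) (Quaternion ℝ)) * Q *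
            (0 : Matrix (Fin n) (Fin n) (Quaternion ℝ))ᴴ)) := (hc.tendsto 0).comp hA
      simpa using ht
    have hT : Tendsto (fun N : ℕ => (∑ k ∈ Finset.range N, f k) + A ^ N * Q * (A ^ N)ᴴ)
        atTop (nhds (P + 0)) := hT1.add hT2
    have hTQ : Tendsto (fun _ : ℕ => Q) atTop
        (nhds (P + 0)) := by
      refine hT.congr fun N => (hrec N).symm
    have := tendsto_nhds_unique hTQ tendsto_const_nhds
    rw [← this, add_zero]
  -- quadratic form
  have hqf : ∀ x : Fin n → Quaternion ℝ,
      HasSum (fun k : ℕ => Quaternion.normSq (star x ⬝ᵥ (A ^ k) *ᵥ v))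
        ((star x ⬝ᵥ P *ᵥ x).re) := by
    intro x
    have hcont : Continuous fun X : Matrix (Fin n) (Fin n) (Quaternion ℝ) =>
        (star x ⬝ᵥ X *ᵥ x).re :=
      Quaternion.continuous_re.comp
        (continuous_const.dotProduct (continuous_id.matrix_mulVec continuous_const))
    let φ : Matrix (Fin n) (Fin n) (Quaternion ℝ) →+ ℝ :=
      AddMonoidHom.mk' (fun X : Matrix (Fin n) (Fin n) (Quaternion ℝ) => (star x ⬝ᵥ X *ᵥ x).re)
        (fun X Y => by
          simp only [Matrix.add_mulVec, dotProduct_add, Quaternion.re_add])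
    have hmap := hP.map φ (by exact hcont)
    have hmap' : HasSum (fun k => (star x ⬝ᵥ (f k) *ᵥ x).re) ((star x ⬝ᵥ P *ᵥ x).re) := hmap
    have hterm : ∀ k : ℕ, (star x ⬝ᵥ (f k) *ᵥ x).re
        = Quaternion.normSq (star x ⬝ᵥ (A ^ k) *ᵥ v) := by
      intro k
      rw [hf]
      dsimp only
      rw [hM, qf_eq, ← Quaternion.normSq_def]
    have heq : (fun k => (star x ⬝ᵥ (f k) *ᵥ x).re)
        = fun k => Quaternion.normSq (star x ⬝ᵥ (A ^ k) *ᵥ v) := funext hterm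
    rwa [heq] at hmap'
  -- positive semidefinite
  have hpsd : ∀ x : Fin n → Quaternion ℝ, 0 ≤ (star x ⬝ᵥ P *ᵥ x).re := by
    intro x
    exact (hqf x).nonneg fun k => Quaternion.normSq_nonneg
  refine ⟨P, hPH, hstein, huniq, hP, hpsd, ?_⟩
  -- positive definite under controllability
  intro hu x hx
  set c : ℕ → Quaternion ℝ := fun k => star x ⬝ᵥ (A ^ k) *ᵥ v with hc
  have hexists : ∃ j : Fin n, c (j : ℕ) ≠ 0 := by
    by_contra hcon
    push_neg at hcon
    obtain ⟨U, hU⟩ := hu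
    have hvm : star x ᵥ* (Matrix.of fun i j : Fin n => ((A ^ (j : ℕ)).mulVec v) i) = 0 := by
      funext j
      have hj := hcon j
      rw [hc] at hj
      simpa [Matrix.vecMul, dotProduct, Matrix.of_apply] using hj
    have hsx : star x = 0 := by
      have h1 : star x ᵥ* (U.val * U⁻¹.val) = star x := by
        rw [U.mul_inv, Matrix.vecMul_one]
      rw [← h1, ← Matrix.vecMul_vecMul, hU, hvm, Matrix.zero_vecMul]
    apply hx
    have := congrArg star hsx
    simpa using this
  obtain ⟨j0, hj0⟩ := hexists
  have hpos : 0 < Quaternion.normSq (c (j0 : ℕ)) :=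
    lt_of_le_of_ne Quaternion.normSq_nonneg (Ne.symm (Quaternion.normSq_ne_zero.2 hj0))
  have hle : Quaternion.normSq (c (j0 : ℕ)) ≤ (star x ⬝ᵥ P *ᵥ x).re :=
    le_hasSum (hqf x) (j0 : ℕ) (fun k _ => Quaternion.normSq_nonneg)
  exact lt_of_lt_of_le hpos hle
end

section
/- Suppose the (n+1) × (n+1) quaternionic matrix [[A, B], [C, D]] with D ∈ ℍ (scalar block) is unitary and the power series f(z) = D + Σ_{k≥1} zᵏ C A^{k−1} B. Then for any quaternions α, β of modulus < 1 where the series Υ(γ) = Σ_{k≥0} γᵏ C Aᵏ converges, one has 1 − f^ℓ(α) · conj(f^ℓ(β)) = Υ(α)Υ(β)* − α Υ(α)Υ(β)* β̄; in particular, taking β = α, 1 − |f^ℓ(α)|² = (1 − |α|²) Υ(α)Υ(α)*. -/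
open Matrix


lemma upsilon_rec {n : ℕ} (A : Matrix (Fin n) (Fin n) (Quaternion ℝ))
    (C : Matrix (Fin 1) (Fin n) (Quaternion ℝ)) (α : Quaternion ℝ)
    (Υ : Matrix (Fin 1) (Fin n) (Quaternion ℝ))
    (h : HasSum (fun k : ℕ => α ^ k • (C * A ^ k)) Υ) :
    Υ = C + α • (Υ * A) := by
  set f : ℕ → Matrix (Fin 1) (Fin n) (Quaternion ℝ) := fun k => α ^ k • (C * A ^ k) with hf
  have hadd : ∀ x y : Matrix (Fin 1) (Fin n) (Quaternion ℝ),
      α • ((x + y) * A) = α • (x * A) + α • (y * A) := by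
    intro x y; rw [Matrix.add_mul, smul_add]
  set φ : Matrix (Fin 1) (Fin n) (Quaternion ℝ) →+ Matrix (Fin 1) (Fin n) (Quaternion ℝ) :=
    AddMonoidHom.mk' (fun M => α • (M * A)) hadd with hφdef
  have hφ : Continuous ⇑φ := by
    show Continuous (fun M : Matrix (Fin 1) (Fin n) (Quaternion ℝ) => α • (M * A))
    exact ((continuous_id.matrix_mul continuous_const)).const_smul α
  have hmap : HasSum (fun k => α • (f k * A)) (α • (Υ * A)) := h.map φ hφ
  have heq : (fun k => α • (f k * A)) = fun k => f (k + 1) := by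
    funext k
    rw [hf]
    show α • (α ^ k • (C * A ^ k) * A) = α ^ (k + 1) • (C * A ^ (k + 1))
    rw [Matrix.smul_mul, smul_smul, ← pow_succ', Matrix.mul_assoc, ← pow_succ]
  rw [heq] at hmap
  have h2 := h.unique ((hasSum_nat_add_iff (f := f) 1).mp hmap)
  simp only [hf, Finset.range_one, Finset.sum_singleton, pow_zero, one_smul,
    Matrix.mul_one] at h2
  conv_lhs => rw [h2]
  exact add_comm _ _

lemma aux_identity {n : ℕ}
    (A : Matrix (Fin n) (Fin n) (Quaternion ℝ))
    (B : Matrix (Fin n) (Fin 1) (Quaternion ℝ))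
    (C : Matrix (Fin 1) (Fin n) (Quaternion ℝ)) (D : Quaternion ℝ)
    (hU : Matrix.fromBlocks A B C (Matrix.of fun _ _ => D) ∈
      unitary (Matrix (Fin n ⊕ Fin 1) (Fin n ⊕ Fin 1) (Quaternion ℝ)))
    (α β : Quaternion ℝ)
    (Υα Υβ : Matrix (Fin 1) (Fin n) (Quaternion ℝ))
    (hΥα : HasSum (fun k : ℕ => α ^ k • (C * A ^ k)) Υα)
    (hΥβ : HasSum (fun k : ℕ => β ^ k • (C * A ^ k)) Υβ) :
    1 - (D + α * (Υα * B) 0 0) * star (D + β * (Υβ * B) 0 0) =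
        (Υα * Υβᴴ) 0 0 - α * (Υα * Υβᴴ) 0 0 * star β := by
  set D' : Matrix (Fin 1) (Fin 1) (Quaternion ℝ) := Matrix.of fun _ _ => D with hD'
  set Sα : Matrix (Fin 1) (Fin 1) (Quaternion ℝ) := α • 1 with hSα
  set Sβ : Matrix (Fin 1) (Fin 1) (Quaternion ℝ) := β • 1 with hSβ
  set Sb : Matrix (Fin 1) (Fin 1) (Quaternion ℝ) := (star β) • 1 with hSb
  -- block equations
  have hMM := (Unitary.mem_iff.mp hU).2
  rw [Matrix.star_eq_conjTranspose, Matrix.fromBlocks_conjTranspose,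
    Matrix.fromBlocks_multiply, ← Matrix.fromBlocks_one] at hMM
  have e11 : A * Aᴴ + B * Bᴴ = 1 := by
    have := congrArg Matrix.toBlocks₁₁ hMM
    simpa only [Matrix.toBlocks_fromBlocks₁₁] using this
  have e12 : A * Cᴴ + B * D'ᴴ = 0 := by
    have := congrArg Matrix.toBlocks₁₂ hMM
    simpa only [Matrix.toBlocks_fromBlocks₁₂] using this
  have e21 : C * Aᴴ + D' * Bᴴ = 0 := by
    have := congrArg Matrix.toBlocks₂₁ hMM
    simpa only [Matrix.toBlocks_fromBlocks₂₁] using this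
  have e22 : C * Cᴴ + D' * D'ᴴ = 1 := by
    have := congrArg Matrix.toBlocks₂₂ hMM
    simpa only [Matrix.toBlocks_fromBlocks₂₂] using this
  have hBB : B * Bᴴ = 1 - A * Aᴴ := eq_sub_of_add_eq' e11
  have hBD : B * D'ᴴ = -(A * Cᴴ) := eq_neg_of_add_eq_zero_right e12
  have hDB : D' * Bᴴ = -(C * Aᴴ) := eq_neg_of_add_eq_zero_right e21
  have hDD : D' * D'ᴴ = 1 - C * Cᴴ := eq_sub_of_add_eq' e22
  -- smul as 1×1 matrix multiplication
  have hsmul : ∀ (m : ℕ) (M : Matrix (Fin 1) (Fin m) (Quaternion ℝ)) (γ : Quaternion ℝ),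
      γ • M = (γ • (1 : Matrix (Fin 1) (Fin 1) (Quaternion ℝ))) * M := by
    intro m M γ; rw [Matrix.smul_mul, Matrix.one_mul]
  -- recurrences
  have recα : Υα = C + Sα * (Υα * A) := by
    rw [hSα, ← hsmul]; exact upsilon_rec A C α Υα hΥα
  have recβ : Υβ = C + Sβ * (Υβ * A) := by
    rw [hSβ, ← hsmul]; exact upsilon_rec A C β Υβ hΥβ
  have hSbH : Sβᴴ = Sb := by
    apply Matrix.ext
    intro i j
    have hij : i = j := Subsingleton.elim i j
    subst hij
    rw [Matrix.conjTranspose_apply, hSβ, hSb, Matrix.smul_apply, Matrix.smul_apply,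
      Matrix.one_apply_eq, smul_eq_mul, smul_eq_mul, mul_one, mul_one]
  have recQ : Υβᴴ = Cᴴ + Aᴴ * (Υβᴴ * Sb) := by
    conv_lhs => rw [recβ]
    rw [Matrix.conjTranspose_add, Matrix.conjTranspose_mul, Matrix.conjTranspose_mul, hSbH,
      Matrix.mul_assoc]
  -- key matrix identity
  have hPQ : Υα * Υβᴴ = C * Cᴴ + Sα * (Υα * (A * Cᴴ)) + C * (Aᴴ * (Υβᴴ * Sb))
      + Sα * (Υα * (A * (Aᴴ * (Υβᴴ * Sb)))) := by
    calc Υα * Υβᴴ = (C + Sα * (Υα * A)) * (Cᴴ + Aᴴ * (Υβᴴ * Sb)) := by rw [← recα, ← recQ]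
    _ = _ := by
        simp only [Matrix.add_mul, Matrix.mul_add, Matrix.mul_assoc]
        abel
  have step : (D' + Sα * (Υα * B)) * (D' + Sβ * (Υβ * B))ᴴ
      = D' * D'ᴴ + (D' * Bᴴ) * (Υβᴴ * Sb) + Sα * (Υα * (B * D'ᴴ))
        + Sα * (Υα * ((B * Bᴴ) * (Υβᴴ * Sb))) := by
    rw [Matrix.conjTranspose_add, Matrix.conjTranspose_mul, Matrix.conjTranspose_mul, hSbH]
    simp only [Matrix.add_mul, Matrix.mul_add, Matrix.mul_assoc]
    abel
  have key : (1 : Matrix (Fin 1) (Fin 1) (Quaternion ℝ))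
      - (D' + Sα * (Υα * B)) * (D' + Sβ * (Υβ * B))ᴴ
      = Υα * Υβᴴ - Sα * (Υα * Υβᴴ) * Sb := by
    rw [step, hDD, hDB, hBD, hBB]
    nth_rewrite 1 [hPQ]
    simp only [Matrix.neg_mul, Matrix.mul_neg, Matrix.sub_mul, Matrix.mul_sub,
      Matrix.one_mul, Matrix.mul_one, Matrix.mul_assoc, Matrix.add_mul, Matrix.mul_add,
      sub_eq_add_neg, neg_add, neg_neg]
    abel
  -- take (0,0) entry
  have h00 := congrArg (fun M : Matrix (Fin 1) (Fin 1) (Quaternion ℝ) => M 0 0) key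
  simp only [hSα, hSβ, hSb, hD', Matrix.sub_apply, Matrix.add_apply, Matrix.one_apply_eq,
    Matrix.mul_apply, Fin.sum_univ_one, Matrix.conjTranspose_apply, Matrix.smul_apply,
    smul_eq_mul, Matrix.of_apply, mul_one, one_mul] at h00 ⊢
  exact h00

/-- For a unitary block matrix [[A,B],[C,D]] with scalar D, the power series
f(z) = D + Σ zᵏCAᵏ⁻¹B satisfies, with Υ(γ) = Σ γᵏCAᵏ (wherever these series
converge and |α|, |β| < 1):
1 − f^ℓ(α)·conj(f^ℓ(β)) = Υ(α)Υ(β)* − αΥ(α)Υ(β)*β̄, where f^ℓ(α) = D + αΥ(α)B;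
in particular 1 − |f^ℓ(α)|² = (1 − |α|²)Υ(α)Υ(α)*. -/
theorem unitary_realization_identity (n : ℕ)
    (A : Matrix (Fin n) (Fin n) (Quaternion ℝ))
    (B : Matrix (Fin n) (Fin 1) (Quaternion ℝ))
    (C : Matrix (Fin 1) (Fin n) (Quaternion ℝ)) (D : Quaternion ℝ)
    (hU : Matrix.fromBlocks A B C (Matrix.of fun _ _ => D) ∈
      unitary (Matrix (Fin n ⊕ Fin 1) (Fin n ⊕ Fin 1) (Quaternion ℝ)))
    (α β : Quaternion ℝ) (hα : ‖α‖ < 1) (hβ : ‖β‖ < 1)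
    (Υα Υβ : Matrix (Fin 1) (Fin n) (Quaternion ℝ))
    (hΥα : HasSum (fun k : ℕ => α ^ k • (C * A ^ k)) Υα)
    (hΥβ : HasSum (fun k : ℕ => β ^ k • (C * A ^ k)) Υβ) :
    (1 - (D + α * (Υα * B) 0 0) * star (D + β * (Υβ * B) 0 0) =
        (Υα * Υβᴴ) 0 0 - α * (Υα * Υβᴴ) 0 0 * star β) ∧
    (1 - ‖D + α * (Υα * B) 0 0‖ ^ 2 = (1 - ‖α‖ ^ 2) * ((Υα * Υαᴴ) 0 0).re) := by
  refine ⟨aux_identity A B C D hU α β Υα Υβ hΥα hΥβ, ?_⟩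
  have h := aux_identity A B C D hU α α Υα Υα hΥα hΥα
  set f : Quaternion ℝ := D + α * (Υα * B) 0 0 with hfdef
  set r : Quaternion ℝ := (Υα * Υαᴴ) 0 0 with hrdef
  -- r is real
  have hrstar : star r = r := by
    rw [hrdef, ← Matrix.conjTranspose_apply]
    rw [Matrix.conjTranspose_mul, Matrix.conjTranspose_conjTranspose]
  have hrre : r = ((r.re : ℝ) : Quaternion ℝ) := Quaternion.star_eq_self.mp hrstar
  -- rewrite h
  rw [Quaternion.self_mul_star] at h
  rw [hrre] at h
  rw [show α * ((r.re : ℝ) : Quaternion ℝ) * star α = ((r.re : ℝ) : Quaternion ℝ) * (α * star α)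
      by rw [← Quaternion.coe_commutes, mul_assoc]] at h
  rw [Quaternion.self_mul_star, ← Quaternion.coe_mul, ← Quaternion.coe_one,
    ← Quaternion.coe_sub, ← Quaternion.coe_sub] at h
  have h' := Quaternion.coe_injective h
  have hnf : Quaternion.normSq f = ‖f‖ ^ 2 := by
    rw [Quaternion.normSq_eq_norm_mul_self, sq]
  have hna : Quaternion.normSq α = ‖α‖ ^ 2 := by
    rw [Quaternion.normSq_eq_norm_mul_self, sq]
  rw [hnf, hna] at h'
  linarith [h']
end
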